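/- In the one-period market with prices y ∈ L^0(ℝ^d, H) and Y ∈ L^0(ℝ^d, F), AIP holds if and only if p(g) ≥ 0 a.s. for some nonnegative H-normal integrand g such that there exists a concave function φ with g ≤ φ < ∞ on conv supp_H Y. -/

import Mathlib

open MeasureTheory Set Filter
open scoped Classical

noncomputable section

/-- Scalar product on `ℝ^d`. -/
def dotp {d : ℕ} (a b : Fin d → ℝ) : ℝ := ∑ i, a i * b i

/-- `κ` is a regular version of the conditional law of `X` knowing the σ-algebra `H`. -/
structure CondLaw {Ω : Type*} (H : MeasurableSpace Ω) {mΩ : MeasurableSpace Ω}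
    (μ : Measure Ω) {E : Type*} [MeasurableSpace E] (X : Ω → E) (κ : Ω → Measure E) :
    Prop where
  isProb : ∀ ω, IsProbabilityMeasure (κ ω)
  meas : ∀ A : Set E, MeasurableSet A → Measurable[H] fun ω => κ ω A
  law : ∀ A : Set E, MeasurableSet A → ∀ B : Set Ω, MeasurableSet[H] B →
    ∫⁻ ω in B, κ ω A ∂μ = μ (B ∩ X ⁻¹' A)

/-- The support of the measure `κ ω`: the intersection of all closed sets of full
measure (for a regular conditional law this is the conditional support). -/
def condSupp {Ω E : Type*} [TopologicalSpace E] [MeasurableSpace E]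
    (κ : Ω → Measure E) (ω : Ω) : Set E :=
  ⋂₀ {A : Set E | IsClosed A ∧ κ ω A = 1}

/-- `γ` is (a version of) the conditional essential supremum of `X` knowing `H`. -/
def IsCondEssSup {Ω : Type*} (H : MeasurableSpace Ω) {mΩ : MeasurableSpace Ω}
    (μ : Measure Ω) (X : Ω → ℝ) (γ : Ω → EReal) : Prop :=
  Measurable[H] γ ∧ (∀ᵐ ω ∂μ, (X ω : EReal) ≤ γ ω) ∧
    ∀ ζ : Ω → EReal, Measurable[H] ζ → (∀ᵐ ω ∂μ, (X ω : EReal) ≤ ζ ω) →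
      ∀ᵐ ω ∂μ, γ ω ≤ ζ ω

/-- `γ` is (a version of) the conditional essential infimum of `X` knowing `H`. -/
def IsCondEssInf {Ω : Type*} (H : MeasurableSpace Ω) {mΩ : MeasurableSpace Ω}
    (μ : Measure Ω) (X : Ω → ℝ) (γ : Ω → EReal) : Prop :=
  Measurable[H] γ ∧ (∀ᵐ ω ∂μ, γ ω ≤ (X ω : EReal)) ∧
    ∀ ζ : Ω → EReal, Measurable[H] ζ → (∀ᵐ ω ∂μ, ζ ω ≤ (X ω : EReal)) →
      ∀ᵐ ω ∂μ, ζ ω ≤ γ ω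

/-- `p` is (a version of) the essential infimum of the family `S` of random variables. -/
def IsEssInfSet {Ω : Type*} {mΩ : MeasurableSpace Ω} (μ : Measure Ω)
    (S : Set (Ω → ℝ)) (p : Ω → EReal) : Prop :=
  Measurable[mΩ] p ∧ (∀ f ∈ S, ∀ᵐ ω ∂μ, p ω ≤ (f ω : EReal)) ∧
    ∀ ζ : Ω → EReal, Measurable[mΩ] ζ → (∀ f ∈ S, ∀ᵐ ω ∂μ, ζ ω ≤ (f ω : EReal)) →
      ∀ᵐ ω ∂μ, ζ ω ≤ p ω

/-- The set of super-hedging prices of the claim `Z` in the one-period market `(y, Y)`. -/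
def Prices {Ω : Type*} (H : MeasurableSpace Ω) {mΩ : MeasurableSpace Ω} (μ : Measure Ω)
    {d : ℕ} (y Y : Ω → Fin d → ℝ) (Z : Ω → ℝ) : Set (Ω → ℝ) :=
  {x | Measurable[H] x ∧ ∃ θ : Ω → Fin d → ℝ, Measurable[H] θ ∧
    ∀ᵐ ω ∂μ, Z ω ≤ x ω + dotp (θ ω) fun i => Y ω i - y ω i}

/-- One-dimensional version of `Prices`. -/
def Prices1 {Ω : Type*} (H : MeasurableSpace Ω) {mΩ : MeasurableSpace Ω} (μ : Measure Ω)
    (y Y : Ω → ℝ) (Z : Ω → ℝ) : Set (Ω → ℝ) :=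
  {x | Measurable[H] x ∧ ∃ θ : Ω → ℝ, Measurable[H] θ ∧
    ∀ᵐ ω ∂μ, Z ω ≤ x ω + θ ω * (Y ω - y ω)}

/-- One-period super-hedging prices of the zero claim in the market extended by the
additional asset `(pZ, Z)`. -/
def PricesExt {Ω : Type*} (H : MeasurableSpace Ω) {mΩ : MeasurableSpace Ω} (μ : Measure Ω)
    {d : ℕ} (y Y : Ω → Fin d → ℝ) (Z pZ : Ω → ℝ) : Set (Ω → ℝ) :=
  {x | Measurable[H] x ∧ ∃ α : Ω → ℝ, Measurable[H] α ∧ ∃ θ : Ω → Fin d → ℝ,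
    Measurable[H] θ ∧
    ∀ᵐ ω ∂μ, 0 ≤ x ω + α ω * (Z ω - pZ ω) + dotp (θ ω) fun i => Y ω i - y ω i}

/-- The function `f = -g + δ_{D}` of the paper, valued in `EReal`. -/
def fObj {Ω : Type*} {d : ℕ} (g : Ω → (Fin d → ℝ) → ℝ) (D : Ω → Set (Fin d → ℝ))
    (ω : Ω) (z : Fin d → ℝ) : EReal :=
  if z ∈ D ω then ((-(g ω z) : ℝ) : EReal) else ⊤

/-- Fenchel–Legendre conjugate of an `EReal`-valued function on `ℝ^d`. -/
def eConj {d : ℕ} (f : (Fin d → ℝ) → EReal) (x : Fin d → ℝ) : EReal :=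
  ⨆ z : Fin d → ℝ, ((dotp x z : ℝ) : EReal) - f z

/-- Convex-analytic indicator function `δ_s`. -/
def indicatorE {E : Type*} (s : Set E) (x : E) : EReal := if x ∈ s then 0 else ⊤

/-- Relative concave envelope of `g` with respect to `D`. -/
def concEnv {d : ℕ} (g : (Fin d → ℝ) → ℝ) (D : Set (Fin d → ℝ)) (x : Fin d → ℝ) : EReal :=
  ⨅ v ∈ {v : (Fin d → ℝ) → ℝ | ConcaveOn ℝ univ v ∧ ∀ z ∈ D, g z ≤ v z}, ((v x : ℝ) : EReal)

/-- Upper semicontinuous closure of an `EReal`-valued function. -/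
def usClosure {E : Type*} [TopologicalSpace E] (F : E → EReal) (x : E) : EReal :=
  Filter.limsup F (nhds x)

/-- The slope `θ^*` of Corollary 2.19, with the conventions of the paper. -/
def thetaStar (g : ℝ → ℝ) (M I : ℝ) (S : EReal) : ℝ :=
  if S = (I : EReal) then 0 else if S = ⊤ then M
  else (g S.toReal - g I) / (S.toReal - I)

/-- Multi-period super-hedging prices at time `t` of the claim `g` paid at time `T`. -/
def PricesMulti {Ω : Type*} {mΩ : MeasurableSpace Ω} (𝓕 : ℕ → MeasurableSpace Ω)
    (μ : Measure Ω) {d : ℕ} (S : ℕ → Ω → Fin d → ℝ) (t T : ℕ) (g : Ω → ℝ) :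
    Set (Ω → ℝ) :=
  {x | Measurable[𝓕 t] x ∧ ∃ θ : ℕ → Ω → Fin d → ℝ, (∀ u, Measurable[𝓕 u] (θ u)) ∧
    ∃ ε : Ω → ℝ, Measurable[𝓕 T] ε ∧ (∀ᵐ ω ∂μ, 0 ≤ ε ω) ∧
    ∀ᵐ ω ∂μ, x ω + (∑ u ∈ Finset.Icc (t+1) T,
      dotp (θ (u-1) ω) fun i => S u ω i - S (u-1) ω i) - ε ω = g ω}

/-- One-step super-hedging prices at time `t` of the (extended-real) claim `G`
paid at time `t+1`. -/
def OneStepPrices {Ω : Type*} {mΩ : MeasurableSpace Ω} (𝓕 : ℕ → MeasurableSpace Ω)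
    (μ : Measure Ω) {d : ℕ} (S : ℕ → Ω → Fin d → ℝ) (t : ℕ) (G : Ω → EReal) :
    Set (Ω → ℝ) :=
  {x | Measurable[𝓕 t] x ∧ ∃ θ : Ω → Fin d → ℝ, Measurable[𝓕 t] θ ∧
    ∀ᵐ ω ∂μ, G ω ≤ ((x ω + dotp (θ ω) fun i => S (t+1) ω i - S t ω i : ℝ) : EReal)}

/-- Multi-period super-hedging prices in the market extended by the additional asset `C`. -/
def PricesMultiExt {Ω : Type*} {mΩ : MeasurableSpace Ω} (𝓕 : ℕ → MeasurableSpace Ω)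
    (μ : Measure Ω) {d : ℕ} (S : ℕ → Ω → Fin d → ℝ) (C : ℕ → Ω → ℝ) (t T : ℕ)
    (g : Ω → ℝ) : Set (Ω → ℝ) :=
  {x | Measurable[𝓕 t] x ∧ ∃ θ : ℕ → Ω → Fin d → ℝ, (∀ u, Measurable[𝓕 u] (θ u)) ∧
    ∃ α : ℕ → Ω → ℝ, (∀ u, Measurable[𝓕 u] (α u)) ∧
    ∃ ε : Ω → ℝ, Measurable[𝓕 T] ε ∧ (∀ᵐ ω ∂μ, 0 ≤ ε ω) ∧
    ∀ᵐ ω ∂μ, x ω + (∑ u ∈ Finset.Icc (t+1) T,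
      ((dotp (θ (u-1) ω) fun i => S u ω i - S (u-1) ω i) +
        α (u-1) ω * (C u ω - C (u-1) ω))) - ε ω = g ω}

/-- The set `R_t^T` of claims super-replicable at zero cost, one-dimensional case. -/
def RsetM {Ω : Type*} {mΩ : MeasurableSpace Ω} (𝓕 : ℕ → MeasurableSpace Ω)
    (μ : Measure Ω) (S : ℕ → Ω → ℝ) (t T : ℕ) : Set (Ω → ℝ) :=
  {X | ∃ θ : ℕ → Ω → ℝ, (∀ u, Measurable[𝓕 u] (θ u)) ∧
    ∃ ε : Ω → ℝ, Measurable[𝓕 T] ε ∧ (∀ᵐ ω ∂μ, 0 ≤ ε ω) ∧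
    ∀ᵐ ω ∂μ, X ω = (∑ u ∈ Finset.Icc (t+1) T, θ (u-1) ω * (S u ω - S (u-1) ω)) - ε ω}

/-- Closure with respect to convergence in probability. -/
def closureP {Ω : Type*} {mΩ : MeasurableSpace Ω} (μ : Measure Ω) (A : Set (Ω → ℝ)) :
    Set (Ω → ℝ) :=
  {X | ∃ f : ℕ → Ω → ℝ, (∀ n, f n ∈ A) ∧ TendstoInMeasure μ f Filter.atTop X}

section AuxSection
open Topology
namespace AuxAIP

variable {d : ℕ}

lemma dotp_comm (a b : Fin d → ℝ) : dotp a b = dotp b a := by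
  unfold dotp; exact Finset.sum_congr rfl fun i _ => mul_comm _ _

lemma dotp_nonneg (a : Fin d → ℝ) : 0 ≤ dotp a a :=
  Finset.sum_nonneg fun i _ => mul_self_nonneg _

lemma sq_le_dotp (a : Fin d → ℝ) (i : Fin d) : a i * a i ≤ dotp a a :=
  Finset.single_le_sum (fun j _ => mul_self_nonneg (a j)) (Finset.mem_univ i)

lemma dotp_add_right (a b c : Fin d → ℝ) :
    dotp a (fun i => b i + c i) = dotp a b + dotp a c := by
  unfold dotp; rw [← Finset.sum_add_distrib]
  exact Finset.sum_congr rfl fun i _ => by ring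

lemma dotp_sub_right (a b c : Fin d → ℝ) :
    dotp a (fun i => b i - c i) = dotp a b - dotp a c := by
  unfold dotp; rw [← Finset.sum_sub_distrib]
  exact Finset.sum_congr rfl fun i _ => by ring

lemma dotp_smul_right (a : Fin d → ℝ) (c : ℝ) (b : Fin d → ℝ) :
    dotp a (fun i => c * b i) = c * dotp a b := by
  unfold dotp; rw [Finset.mul_sum]
  exact Finset.sum_congr rfl fun i _ => by ring

lemma dotp_smul_left (c : ℝ) (a b : Fin d → ℝ) :
    dotp (fun i => c * a i) b = c * dotp a b := by
  rw [dotp_comm, dotp_smul_right, dotp_comm]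

lemma dotp_add_left (a b c : Fin d → ℝ) :
    dotp (fun i => a i + b i) c = dotp a c + dotp b c := by
  unfold dotp; rw [← Finset.sum_add_distrib]
  exact Finset.sum_congr rfl fun i _ => by ring

lemma dotp_sub_self (a b : Fin d → ℝ) :
    dotp (fun i => a i - b i) (fun i => a i - b i)
      = dotp a a - 2 * dotp a b + dotp b b := by
  unfold dotp
  rw [Finset.mul_sum, ← Finset.sum_sub_distrib, ← Finset.sum_add_distrib]
  exact Finset.sum_congr rfl fun i _ => by ring

lemma dotp_midpoint (a b : Fin d → ℝ) :
    dotp (fun i => (a i + b i)/2) (fun i => (a i + b i)/2)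
      = (dotp a a + dotp b b)/2
        - dotp (fun i => (a i - b i)/2) (fun i => (a i - b i)/2) := by
  unfold dotp
  rw [← Finset.sum_add_distrib, eq_sub_iff_add_eq, ← Finset.sum_add_distrib,
    Finset.sum_div]
  exact Finset.sum_congr rfl fun i _ => by ring

lemma dotp_le_quarter (θ B : Fin d → ℝ) :
    dotp θ B ≤ dotp θ θ + dotp B B / 4 := by
  have h := dotp_nonneg (fun i => θ i - B i / 2)
  have e : dotp (fun i => θ i - B i / 2) (fun i => θ i - B i / 2)
      = dotp θ θ - dotp θ B + dotp B B / 4 := by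
    have := dotp_sub_self θ (fun i => B i / 2)
    have h1 : dotp θ (fun i => B i / 2) = dotp θ B / 2 := by
      have := dotp_smul_right θ (1/2) B
      simpa [div_eq_mul_inv, mul_comm] using this
    have h2 : dotp (fun i => B i / 2) (fun i => B i / 2) = dotp B B / 4 := by
      have ha : dotp (fun i => B i / 2) (fun i => B i / 2)
          = (1/2) * dotp B (fun i => B i / 2) := by
        have := dotp_smul_left (1/2) B (fun i => B i / 2)
        simpa [div_eq_mul_inv, mul_comm] using this
      have hb : dotp B (fun i => B i / 2) = (1/2) * dotp B B := by
        have := dotp_smul_right B (1/2) B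
        simpa [div_eq_mul_inv, mul_comm] using this
      rw [ha, hb]; ring
    rw [this, h1, h2]; ring
  nlinarith [h, e]

lemma dotp_mid_left (a b v : Fin d → ℝ) :
    dotp (fun i => (a i + b i)/2) v = (dotp a v + dotp b v)/2 := by
  unfold dotp
  rw [← Finset.sum_add_distrib, Finset.sum_div]
  exact Finset.sum_congr rfl fun i _ => by ring

lemma continuous_dotp_right (v : Fin d → ℝ) :
    Continuous fun θ : Fin d → ℝ => dotp θ v := by
  unfold dotp
  exact continuous_finset_sum _ fun i _ => (continuous_apply i).mul continuous_const

lemma continuous_dotp_self : Continuous fun θ : Fin d → ℝ => dotp θ θ := by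
  unfold dotp
  exact continuous_finset_sum _ fun i _ => (continuous_apply i).mul (continuous_apply i)

lemma measurable_dotp {Ω : Type*} {mΩ : MeasurableSpace Ω} {f g : Ω → Fin d → ℝ}
    (hf : Measurable f) (hg : Measurable g) :
    Measurable fun ω => dotp (f ω) (g ω) := by
  unfold dotp
  exact Finset.measurable_sum _ fun i _ =>
    ((measurable_pi_apply i).comp hf).mul ((measurable_pi_apply i).comp hg)

def QE (d : ℕ) : ℕ → (Fin d → ℝ) := TopologicalSpace.denseSeq (Fin d → ℝ)

lemma exists_QE_close (d : ℕ) (x : Fin d → ℝ) {ε : ℝ} (hε : 0 < ε) :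
    ∃ j, dist (QE d j) x < ε := by
  obtain ⟨j, hj⟩ := Metric.denseRange_iff.1 (TopologicalSpace.denseRange_denseSeq _) x ε hε
  exact ⟨j, by rwa [dist_comm]⟩

variable {Ω : Type*} {mΩ : MeasurableSpace Ω}

/-- finite max of affine functions. -/
def maxAff (A : ℕ → Ω → ℝ) (B : ℕ → Ω → Fin d → ℝ) : ℕ → Ω → (Fin d → ℝ) → ℝ
  | 0 => fun ω θ => A 0 ω - dotp θ (B 0 ω)
  | (m+1) => fun ω θ => max (maxAff A B m ω θ) (A (m+1) ω - dotp θ (B (m+1) ω))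

/-- objective with quadratic penalty. -/
def Hfun (A : ℕ → Ω → ℝ) (B : ℕ → Ω → Fin d → ℝ) (m : ℕ) (ω : Ω) (θ : Fin d → ℝ) : ℝ :=
  maxAff A B m ω θ + dotp θ θ

variable {A : ℕ → Ω → ℝ} {B : ℕ → Ω → Fin d → ℝ}

lemma maxAff_zero (ω : Ω) (θ : Fin d → ℝ) :
    maxAff A B 0 ω θ = A 0 ω - dotp θ (B 0 ω) := rfl

lemma maxAff_succ (m : ℕ) (ω : Ω) (θ : Fin d → ℝ) :
    maxAff A B (m+1) ω θ = max (maxAff A B m ω θ) (A (m+1) ω - dotp θ (B (m+1) ω)) := rfl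

lemma le_maxAff (ω : Ω) (θ : Fin d → ℝ) :
    ∀ m k, k ≤ m → A k ω - dotp θ (B k ω) ≤ maxAff A B m ω θ := by
  intro m
  induction m with
  | zero => intro k hk; interval_cases k; exact le_refl _
  | succ m ih =>
    intro k hk
    rcases Nat.lt_or_ge k (m+1) with h | h
    · exact le_trans (ih k (by omega)) (le_max_left _ _)
    · have : k = m + 1 := by omega
      subst this
      exact le_max_right _ _

lemma maxAff_le (ω : Ω) (θ : Fin d → ℝ) {C : ℝ}
    (h : ∀ k, A k ω - dotp θ (B k ω) ≤ C) : ∀ m, maxAff A B m ω θ ≤ C := by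
  intro m
  induction m with
  | zero => exact h 0
  | succ m ih => exact max_le ih (h (m+1))

lemma continuous_maxAff (ω : Ω) : ∀ m, Continuous fun θ => maxAff A B m ω θ := by
  intro m
  induction m with
  | zero => exact continuous_const.sub (continuous_dotp_right _)
  | succ m ih => exact ih.max (continuous_const.sub (continuous_dotp_right _))

lemma continuous_Hfun (ω : Ω) (m : ℕ) : Continuous fun θ => Hfun A B m ω θ :=
  (continuous_maxAff ω m).add continuous_dotp_self

lemma measurable_maxAff (hA : ∀ k, Measurable (A k)) (hB : ∀ k, Measurable (B k))
    {f : Ω → Fin d → ℝ} (hf : Measurable f) :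
    ∀ m, Measurable fun ω => maxAff A B m ω (f ω) := by
  intro m
  induction m with
  | zero => exact (hA 0).sub (measurable_dotp hf (hB 0))
  | succ m ih => exact ih.max ((hA (m+1)).sub (measurable_dotp hf (hB (m+1))))

lemma measurable_Hfun (hA : ∀ k, Measurable (A k)) (hB : ∀ k, Measurable (B k))
    {f : Ω → Fin d → ℝ} (hf : Measurable f) (m : ℕ) :
    Measurable fun ω => Hfun A B m ω (f ω) :=
  (measurable_maxAff hA hB hf m).add (measurable_dotp hf hf)

lemma maxAff_midpoint (ω : Ω) (a b : Fin d → ℝ) :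
    ∀ m, maxAff A B m ω (fun i => (a i + b i)/2)
      ≤ (maxAff A B m ω a + maxAff A B m ω b)/2 := by
  intro m
  induction m with
  | zero =>
    rw [maxAff_zero, maxAff_zero, maxAff_zero, dotp_mid_left]
    linarith
  | succ m ih =>
    rw [maxAff_succ, maxAff_succ, maxAff_succ, dotp_mid_left]
    apply max_le
    · refine le_trans ih ?_
      have h1 := le_max_left (maxAff A B m ω a) (A (m+1) ω - dotp a (B (m+1) ω))
      have h2 := le_max_left (maxAff A B m ω b) (A (m+1) ω - dotp b (B (m+1) ω))
      linarith
    · have h1 := le_max_right (maxAff A B m ω a) (A (m+1) ω - dotp a (B (m+1) ω))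
      have h2 := le_max_right (maxAff A B m ω b) (A (m+1) ω - dotp b (B (m+1) ω))
      linarith

lemma Hfun_midpoint (ω : Ω) (a b : Fin d → ℝ) (m : ℕ) :
    Hfun A B m ω (fun i => (a i + b i)/2)
      ≤ (Hfun A B m ω a + Hfun A B m ω b)/2
        - dotp (fun i => (a i - b i)/2) (fun i => (a i - b i)/2) := by
  unfold Hfun
  have h1 := maxAff_midpoint (A := A) (B := B) ω a b m
  have h2 := dotp_midpoint a b
  linarith

lemma Hfun_lower (ω : Ω) (m : ℕ) (θ : Fin d → ℝ) :
    A 0 ω - dotp (B 0 ω) (B 0 ω) / 4 ≤ Hfun A B m ω θ := by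
  have h1 := le_maxAff (A := A) (B := B) ω θ m 0 (Nat.zero_le m)
  have h2 := dotp_le_quarter θ (B 0 ω)
  unfold Hfun
  linarith

lemma maxAff_mono (ω : Ω) (θ : Fin d → ℝ) (m : ℕ) :
    maxAff A B m ω θ ≤ maxAff A B (m+1) ω θ := le_max_left _ _




variable {d : ℕ} {Ω : Type*} {mΩ : MeasurableSpace Ω}
variable {A : ℕ → Ω → ℝ} {B : ℕ → Ω → Fin d → ℝ}

lemma maxAff_le_of_le (ω : Ω) (θ : Fin d → ℝ) {m l : ℕ} (h : m ≤ l) :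
    maxAff A B m ω θ ≤ maxAff A B l ω θ := by
  induction l, h using Nat.le_induction with
  | base => exact le_refl _
  | succ l hml ih => exact le_trans ih (maxAff_mono ω θ l)

/-- convergence from a square-norm Cauchy-type bound. -/
lemma tendsto_of_sq_bound {u : ℕ → Fin d → ℝ} {b : ℕ → ℝ}
    (hb : Tendsto b atTop (𝓝 0))
    (h : ∀ j l, j ≤ l →
      dotp (fun i => (u j i - u l i)/2) (fun i => (u j i - u l i)/2) ≤ b j) :
    ∃ x, Tendsto u atTop (𝓝 x) := by
  have hcauchy : ∀ i, CauchySeq (fun j => u j i) := by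
    intro i
    rw [Metric.cauchySeq_iff']
    intro ε hε
    have h8 : (0:ℝ) < ε^2/8 := by positivity
    obtain ⟨N, hN⟩ := (Metric.tendsto_atTop.1 hb) (ε^2/8) h8
    refine ⟨N, fun n hn => ?_⟩
    have hD := h N n hn
    have hsq := sq_le_dotp (fun i => (u N i - u n i)/2) i
    have hbN : |b N| < ε^2/8 := by
      have := hN N le_rfl
      rwa [Real.dist_eq, sub_zero] at this
    have h5 : (u n i - u N i) * (u n i - u N i) < ε * ε := by
      have habs : b N < ε^2/8 := lt_of_le_of_lt (le_abs_self _) hbN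
      nlinarith [hD, hsq]
    rw [Real.dist_eq]
    by_contra hcon
    push_neg at hcon
    have h6 : ε * ε ≤ |u n i - u N i| * |u n i - u N i| :=
      mul_le_mul hcon hcon hε.le (abs_nonneg _)
    rw [abs_mul_abs_self] at h6
    linarith
  have hcl : ∀ i, ∃ xi, Tendsto (fun j => u j i) atTop (𝓝 xi) :=
    fun i => cauchySeq_tendsto_of_complete (hcauchy i)
  exact ⟨fun i => Classical.choose (hcl i),
    tendsto_pi_nhds.2 fun i => Classical.choose_spec (hcl i)⟩

/-- measurable exact minimizer of `Hfun` at level `m`. -/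
lemma exists_min (hA : ∀ k, Measurable (A k)) (hB : ∀ k, Measurable (B k)) (m : ℕ) :
    ∃ θm : Ω → Fin d → ℝ, Measurable θm ∧
      ∀ ω θ, Hfun A B m ω (θm ω) ≤ Hfun A B m ω θ := by
  have hex : ∀ (j : ℕ) (ω : Ω), ∃ i, ∀ i',
      Hfun A B m ω (QE d i) ≤ Hfun A B m ω (QE d i') + 1/((j:ℝ)+1) := by
    intro j ω
    have hbdd : BddBelow (Set.range fun i => Hfun A B m ω (QE d i)) := by
      refine ⟨A 0 ω - dotp (B 0 ω) (B 0 ω)/4, ?_⟩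
      rintro x ⟨i, rfl⟩
      exact Hfun_lower ω m _
    have hlt : ⨅ i, Hfun A B m ω (QE d i)
        < (⨅ i, Hfun A B m ω (QE d i)) + 1/((j:ℝ)+1) :=
      lt_add_of_pos_right _ (by positivity)
    obtain ⟨i, hi⟩ := exists_lt_of_ciInf_lt hlt
    refine ⟨i, fun i' => ?_⟩
    have h2 := ciInf_le hbdd i'
    linarith [hi.le]
  set r : ℕ → Ω → Fin d → ℝ := fun j ω => QE d (Nat.find (hex j ω)) with hr
  have hrmeas : ∀ j, Measurable (r j) := by
    intro j
    apply measurable_from_top.comp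
    apply measurable_find
    intro i
    rw [Set.setOf_forall]
    apply MeasurableSet.iInter
    intro i'
    exact measurableSet_le (measurable_Hfun hA hB measurable_const m)
      ((measurable_Hfun hA hB measurable_const m).add_const _)
  have happrox : ∀ j ω θ, Hfun A B m ω (r j ω) ≤ Hfun A B m ω θ + 1/((j:ℝ)+1) := by
    intro j ω θ
    have hspec := Nat.find_spec (hex j ω)
    apply le_of_forall_pos_le_add
    intro δ hδ
    have hc : ContinuousAt (fun θ' => Hfun A B m ω θ') θ := (continuous_Hfun ω m).continuousAt
    obtain ⟨η, hη, hball⟩ := Metric.continuousAt_iff.1 hc δ hδ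
    obtain ⟨i', hi'⟩ := exists_QE_close d θ hη
    have h2 : |Hfun A B m ω (QE d i') - Hfun A B m ω θ| < δ := by
      have := hball hi'
      rwa [Real.dist_eq] at this
    have h3 := hspec i'
    rw [abs_lt] at h2
    linarith
  have hDbound : ∀ j l (ω : Ω), j ≤ l →
      dotp (fun i => (r j ω i - r l ω i)/2) (fun i => (r j ω i - r l ω i)/2)
        ≤ 1/((j:ℝ)+1) := by
    intro j l ω hjl
    have h1 := happrox j ω (fun i => (r j ω i + r l ω i)/2)
    have h2 := happrox l ω (fun i => (r j ω i + r l ω i)/2)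
    have h3 := Hfun_midpoint (A := A) (B := B) ω (r j ω) (r l ω) m
    have h4 : 1/((l:ℝ)+1) ≤ 1/((j:ℝ)+1) := by
      apply one_div_le_one_div_of_le (by positivity)
      have : (j:ℝ) ≤ (l:ℝ) := Nat.cast_le.2 hjl
      linarith
    linarith
  have hlimA : ∀ ω, ∃ x, Tendsto (fun j => r j ω) atTop (𝓝 x) := by
    intro ω
    apply tendsto_of_sq_bound (b := fun j => 1/((j:ℝ)+1))
    · exact tendsto_one_div_add_atTop_nhds_zero_nat
    · exact fun j l hjl => hDbound j l ω hjl
  set θm : Ω → Fin d → ℝ := fun ω => Classical.choose (hlimA ω) with hθm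
  have htend : ∀ ω, Tendsto (fun j => r j ω) atTop (𝓝 (θm ω)) :=
    fun ω => Classical.choose_spec (hlimA ω)
  refine ⟨θm, ?_, ?_⟩
  · exact measurable_of_tendsto_metrizable' atTop hrmeas (tendsto_pi_nhds.2 htend)
  · intro ω θ
    have ht1 : Tendsto (fun j => Hfun A B m ω (r j ω)) atTop (𝓝 (Hfun A B m ω (θm ω))) :=
      ((continuous_Hfun ω m).tendsto _).comp (htend ω)
    have ht2 : Tendsto (fun j : ℕ => Hfun A B m ω θ + 1/((j:ℝ)+1)) atTop
        (𝓝 (Hfun A B m ω θ)) := by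
      have := tendsto_const_nhds (x := Hfun A B m ω θ) (f := atTop (α := ℕ))
      have h0 := this.add tendsto_one_div_add_atTop_nhds_zero_nat
      simpa using h0
    exact le_of_tendsto_of_tendsto' ht1 ht2 (fun j => happrox j ω θ)

/-- the measurable selection lemma: a measurable uniform affine dominator. -/
lemma exists_selection (hA : ∀ k, Measurable (A k)) (hB : ∀ k, Measurable (B k))
    (hprop : ∀ ω, ∃ θ C, ∀ k, A k ω - dotp θ (B k ω) ≤ C) :
    ∃ (θs : Ω → Fin d → ℝ) (c : Ω → ℝ), Measurable θs ∧ Measurable c ∧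
      ∀ ω k, A k ω - dotp (θs ω) (B k ω) ≤ c ω := by
  choose θm hθmeas hθopt using fun m => exists_min (A := A) (B := B) hA hB m
  set v : ℕ → Ω → ℝ := fun m ω => Hfun A B m ω (θm m ω) with hv
  have hvmeas : ∀ m, Measurable (v m) := fun m => measurable_Hfun hA hB (hθmeas m) m
  have hHmono : ∀ m l (ω : Ω) θ, m ≤ l → Hfun A B m ω θ ≤ Hfun A B l ω θ := by
    intro m l ω θ hml
    unfold Hfun
    have := maxAff_le_of_le (A := A) (B := B) ω θ hml
    linarith
  have hvmono : Monotone fun m => v m := by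
    apply monotone_nat_of_le_succ
    intro m
    intro ω
    calc v m ω ≤ Hfun A B m ω (θm (m+1) ω) := hθopt m ω _
    _ ≤ Hfun A B (m+1) ω (θm (m+1) ω) := hHmono m (m+1) ω _ (by omega)
    _ = v (m+1) ω := rfl
  choose θhat Chat hhat using hprop
  have hvle : ∀ m ω, v m ω ≤ Chat ω + dotp (θhat ω) (θhat ω) := by
    intro m ω
    calc v m ω ≤ Hfun A B m ω (θhat ω) := hθopt m ω _
    _ ≤ Chat ω + dotp (θhat ω) (θhat ω) := by
        unfold Hfun
        have := maxAff_le (A := A) (B := B) ω (θhat ω) (hhat ω) m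
        linarith
  have hvmono' : ∀ ω, Monotone fun m => v m ω := by
    intro ω m l hml
    exact hvmono hml ω
  have hvcauchy : ∀ ω, ∃ Lω, Tendsto (fun m => v m ω) atTop (𝓝 Lω) := by
    intro ω
    refine ⟨_, tendsto_atTop_ciSup (hvmono' ω) ?_⟩
    refine ⟨Chat ω + dotp (θhat ω) (θhat ω), ?_⟩
    rintro x ⟨m, rfl⟩
    exact hvle m ω
  set L : Ω → ℝ := fun ω => Classical.choose (hvcauchy ω) with hL
  have hLt : ∀ ω, Tendsto (fun m => v m ω) atTop (𝓝 (L ω)) :=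
    fun ω => Classical.choose_spec (hvcauchy ω)
  have hLmeas : Measurable L :=
    measurable_of_tendsto_metrizable' atTop hvmeas (tendsto_pi_nhds.2 hLt)
  have hvleL : ∀ m ω, v m ω ≤ L ω := fun m ω => (hvmono' ω).ge_of_tendsto (hLt ω) m
  have hθbound : ∀ ω m l, m ≤ l →
      dotp (fun i => (θm m ω i - θm l ω i)/2) (fun i => (θm m ω i - θm l ω i)/2)
        ≤ (L ω - v m ω)/2 := by
    intro ω m l hml
    have h1 := Hfun_midpoint (A := A) (B := B) ω (θm m ω) (θm l ω) m
    have h2 : Hfun A B m ω (θm l ω) ≤ v l ω := hHmono m l ω _ hml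
    have h3 := hθopt m ω (fun i => (θm m ω i + θm l ω i)/2)
    have h4 := hvleL l ω
    have h5 : Hfun A B m ω (θm m ω) = v m ω := rfl
    linarith
  have hlimθ : ∀ ω, ∃ x, Tendsto (fun m => θm m ω) atTop (𝓝 x) := by
    intro ω
    apply tendsto_of_sq_bound (b := fun m => (L ω - v m ω)/2)
    · have h0 : Tendsto (fun m => L ω - v m ω) atTop (𝓝 (L ω - L ω)) :=
        tendsto_const_nhds.sub (hLt ω)
      have := h0.div_const 2
      simpa using this
    · exact fun m l hml => hθbound ω m l hml
  set θs : Ω → Fin d → ℝ := fun ω => Classical.choose (hlimθ ω) with hθs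
  have htends : ∀ ω, Tendsto (fun m => θm m ω) atTop (𝓝 (θs ω)) :=
    fun ω => Classical.choose_spec (hlimθ ω)
  have hθsmeas : Measurable θs :=
    measurable_of_tendsto_metrizable' atTop hθmeas (tendsto_pi_nhds.2 htends)
  refine ⟨θs, fun ω => L ω - dotp (θs ω) (θs ω), hθsmeas,
    hLmeas.sub (measurable_dotp hθsmeas hθsmeas), ?_⟩
  intro ω k
  have hstep : ∀ m, k ≤ m →
      A k ω - dotp (θm m ω) (B k ω) + dotp (θm m ω) (θm m ω) ≤ L ω := by
    intro m hkm
    have h1 := le_maxAff (A := A) (B := B) ω (θm m ω) m k hkm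
    have h2 := hvleL m ω
    have h3 : v m ω = maxAff A B m ω (θm m ω) + dotp (θm m ω) (θm m ω) := rfl
    linarith
  have htt : Tendsto (fun m => A k ω - dotp (θm m ω) (B k ω) + dotp (θm m ω) (θm m ω))
      atTop (𝓝 (A k ω - dotp (θs ω) (B k ω) + dotp (θs ω) (θs ω))) := by
    have hc : Continuous (fun θ : Fin d → ℝ => A k ω - dotp θ (B k ω) + dotp θ θ) :=
      (continuous_const.sub (continuous_dotp_right _)).add continuous_dotp_self
    exact (hc.tendsto _).comp (htends ω)
  have hfin := le_of_tendsto htt (eventually_atTop.2 ⟨k, hstep⟩)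
  show A k ω - dotp (θs ω) (B k ω) ≤ L ω - dotp (θs ω) (θs ω)
  linarith




lemma mem_condSupp_iff' {Ω : Type*} {d : ℕ} (κ : Ω → Measure (Fin d → ℝ))
    (hprob : ∀ ω, IsProbabilityMeasure (κ ω)) (ω : Ω) (z : Fin d → ℝ) :
    z ∈ condSupp κ ω ↔ ∀ r > 0, 0 < κ ω (Metric.ball z r) := by
  constructor
  · intro hz r hr
    by_contra hpos
    push_neg at hpos
    have h0 : κ ω (Metric.ball z r) = 0 := le_antisymm hpos bot_le
    have hA : IsClosed (Metric.ball z r)ᶜ ∧ κ ω (Metric.ball z r)ᶜ = 1 := by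
      refine ⟨Metric.isOpen_ball.isClosed_compl, ?_⟩
      have := hprob ω
      rw [measure_compl Metric.isOpen_ball.measurableSet (by simp [h0]), h0]
      simp
    exact (by simpa using hz _ hA : ¬ z ∈ Metric.ball z r) (Metric.mem_ball_self hr)
  · intro hball A hA
    obtain ⟨hAc, hA1⟩ := hA
    by_contra hzA
    obtain ⟨r, hr, hsub⟩ := Metric.isOpen_iff.1 hAc.isOpen_compl z hzA
    have h1 : κ ω (Metric.ball z r) ≤ κ ω Aᶜ := measure_mono hsub
    have h2 : κ ω Aᶜ = 0 := by
      have := hprob ω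
      rw [measure_compl hAc.measurableSet (by simp), hA1]
      simp
    rw [h2] at h1
    exact absurd (le_antisymm h1 bot_le) (ne_of_gt (hball r hr))

def rad (m n : ℕ) : ℝ := (1/2 : ℝ) ^ (m + n)

lemma rad_pos (m n : ℕ) : 0 < rad m n := by unfold rad; positivity

lemma rad_succ (m n : ℕ) : rad m (n+1) = rad m n / 2 := by
  unfold rad; rw [← Nat.add_assoc, pow_succ]; ring

/-- covering step: a positive-measure ball contains a positive-measure rational ball
of half radius centered close by. -/
lemma cover_step {d : ℕ} (ν : Measure (Fin d → ℝ)) (x : Fin d → ℝ) {r : ℝ} (hr : 0 < r)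
    (hpos : 0 < ν (Metric.ball x r)) :
    ∃ j, dist (QE d j) x < r ∧ 0 < ν (Metric.ball (QE d j) (r/2)) := by
  by_contra hcon
  push_neg at hcon
  set T : ℕ → Set (Fin d → ℝ) := fun j =>
    if dist (QE d j) x < r then Metric.ball (QE d j) (r/2) else ∅ with hT
  have hTnull : ∀ j, ν (T j) = 0 := by
    intro j
    simp only [hT]
    split_ifs with h
    · exact le_antisymm (hcon j h) bot_le
    · simp
  have hcover : Metric.ball x r ⊆ ⋃ j, T j := by
    intro w hw
    rw [Metric.mem_ball] at hw
    have hδ : 0 < min (r/2) (r - dist w x) := by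
      apply lt_min (by linarith) (by linarith)
    obtain ⟨j, hj⟩ := exists_QE_close d w hδ
    refine Set.mem_iUnion.2 ⟨j, ?_⟩
    have hd1 : dist (QE d j) x < r := by
      calc dist (QE d j) x ≤ dist (QE d j) w + dist w x := dist_triangle _ _ _
      _ < min (r/2) (r - dist w x) + dist w x := by linarith
      _ ≤ (r - dist w x) + dist w x := by
          have := min_le_right (r/2) (r - dist w x); linarith
      _ = r := by ring
    simp only [hT, if_pos hd1]
    rw [Metric.mem_ball, dist_comm]
    calc dist (QE d j) w < min (r/2) (r - dist w x) := hj
    _ ≤ r/2 := min_le_left _ _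
  have : ν (Metric.ball x r) = 0 := by
    have h1 : ν (⋃ j, T j) = 0 := measure_iUnion_null hTnull
    exact le_antisymm (le_trans (measure_mono hcover) h1.le) bot_le
  rw [this] at hpos
  exact lt_irrefl _ hpos

/-- auxiliary dite-find measurability. -/
lemma measurable_dite_find {Ω : Type*} [MeasurableSpace Ω] {p : Ω → ℕ → Prop}
    [inst : ∀ ω, DecidablePred (p ω)]
    (hp : ∀ j, MeasurableSet {ω | p ω j}) :
    Measurable (fun ω => if h : ∃ j, p ω j then Nat.find h else 0) := by
  apply measurable_to_countable'
  intro n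
  have hset : (fun ω => if h : ∃ j, p ω j then Nat.find h else 0) ⁻¹' {n}
      = ({ω | p ω n} ∩ ⋂ (m : ℕ) (_ : m < n), {ω | ¬ p ω m}) ∪
        ((⋂ j, {ω | ¬ p ω j}) ∩ (if n = 0 then (Set.univ : Set Ω) else ∅)) := by
    ext ω
    simp only [Set.mem_preimage, Set.mem_singleton_iff, Set.mem_union, Set.mem_inter_iff,
      Set.mem_iInter, Set.mem_setOf_eq]
    by_cases h : ∃ j, p ω j
    · rw [dif_pos h, Nat.find_eq_iff h]
      constructor
      · rintro ⟨hpn, hlt⟩; exact Or.inl ⟨hpn, hlt⟩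
      · rintro (⟨hpn, hlt⟩ | ⟨hall, _⟩)
        · exact ⟨hpn, hlt⟩
        · obtain ⟨j, hj⟩ := h; exact absurd hj (hall j)
    · rw [dif_neg h]
      push_neg at h
      constructor
      · intro h0
        refine Or.inr ⟨h, ?_⟩
        rw [if_pos h0.symm]; trivial
      · rintro (⟨hpn, _⟩ | ⟨_, hmem⟩)
        · exact absurd hpn (h n)
        · by_cases hn : n = 0
          · exact hn.symm
          · rw [if_neg hn] at hmem; exact absurd hmem (Set.notMem_empty ω)
  rw [hset]
  apply MeasurableSet.union
  · exact (hp n).inter (MeasurableSet.iInter fun m => MeasurableSet.iInter fun _ =>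
      (hp m).compl)
  · refine (MeasurableSet.iInter fun j => (hp j).compl).inter ?_
    split_ifs
    · exact MeasurableSet.univ
    · exact MeasurableSet.empty





variable {Ω : Type*} {mΩ : MeasurableSpace Ω} {d : ℕ}

lemma measurable_posball (κ : Ω → Measure (Fin d → ℝ))
    (hmeas : ∀ A : Set (Fin d → ℝ), MeasurableSet A → Measurable fun ω => κ ω A)
    (q : Fin d → ℝ) (r : ℝ) : MeasurableSet {ω | 0 < κ ω (Metric.ball q r)} :=
  measurableSet_lt measurable_const (hmeas _ Metric.isOpen_ball.measurableSet)

/-- measurable starting index for the recursive scheme. -/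
def startIdx (κ : Ω → Measure (Fin d → ℝ)) (i m : ℕ) (ω : Ω) : ℕ :=
  if 0 < κ ω (Metric.ball (QE d i) (rad m 0)) then i
  else if h : ∃ i', 0 < κ ω (Metric.ball (QE d i') (rad m 0)) then Nat.find h else 0

lemma startIdx_meas (κ : Ω → Measure (Fin d → ℝ))
    (hmeas : ∀ A : Set (Fin d → ℝ), MeasurableSet A → Measurable fun ω => κ ω A)
    (i m : ℕ) : Measurable (startIdx κ i m) := by
  apply Measurable.ite (measurable_posball κ hmeas _ _) measurable_const
  exact measurable_dite_find (fun j => measurable_posball κ hmeas _ _)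

lemma startIdx_pos (κ : Ω → Measure (Fin d → ℝ)) (i m : ℕ) (ω : Ω)
    (hgood : ∃ i', 0 < κ ω (Metric.ball (QE d i') (rad m 0))) :
    0 < κ ω (Metric.ball (QE d (startIdx κ i m ω)) (rad m 0)) := by
  unfold startIdx
  by_cases h1 : 0 < κ ω (Metric.ball (QE d i) (rad m 0))
  · rwa [if_pos h1]
  · rw [if_neg h1, dif_pos hgood]
    exact Nat.find_spec hgood

/-- the recursive dyadic refinement scheme. -/
def castSeq (κ : Ω → Measure (Fin d → ℝ)) (i m : ℕ) : ℕ → Ω → ℕ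
  | 0 => startIdx κ i m
  | (n+1) => fun ω =>
      if h : ∃ j, dist (QE d j) (QE d (castSeq κ i m n ω)) < rad m n ∧
          0 < κ ω (Metric.ball (QE d j) (rad m (n+1))) then Nat.find h else 0

lemma castSeq_meas (κ : Ω → Measure (Fin d → ℝ))
    (hmeas : ∀ A : Set (Fin d → ℝ), MeasurableSet A → Measurable fun ω => κ ω A)
    (i m : ℕ) : ∀ n, Measurable (castSeq κ i m n) := by
  intro n
  induction n with
  | zero => exact startIdx_meas κ hmeas i m
  | succ n ih =>
    show Measurable fun ω =>
      if h : ∃ j, dist (QE d j) (QE d (castSeq κ i m n ω)) < rad m n ∧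
          0 < κ ω (Metric.ball (QE d j) (rad m (n+1))) then Nat.find h else 0
    apply measurable_dite_find
    intro j
    have h1 : MeasurableSet {ω | dist (QE d j) (QE d (castSeq κ i m n ω)) < rad m n} := by
      exact ih (by trivial : MeasurableSet {k : ℕ | dist (QE d j) (QE d k) < rad m n})
    exact h1.inter (measurable_posball κ hmeas _ _)

lemma castSeq_invariant (κ : Ω → Measure (Fin d → ℝ)) (i m : ℕ) (ω : Ω)
    (hprob : ∀ ω, IsProbabilityMeasure (κ ω))
    (hgood : ∃ i', 0 < κ ω (Metric.ball (QE d i') (rad m 0))) :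
    ∀ n, 0 < κ ω (Metric.ball (QE d (castSeq κ i m n ω)) (rad m n)) ∧
      (∀ n', n = n' + 1 →
        dist (QE d (castSeq κ i m n ω)) (QE d (castSeq κ i m n' ω)) < rad m n') := by
  intro n
  induction n with
  | zero =>
    exact ⟨startIdx_pos κ i m ω hgood, fun n' h => absurd h (by omega)⟩
  | succ n ih =>
    have hex : ∃ j, dist (QE d j) (QE d (castSeq κ i m n ω)) < rad m n ∧
        0 < κ ω (Metric.ball (QE d j) (rad m (n+1))) := by
      obtain ⟨j, h1, h2⟩ := cover_step (κ ω) (QE d (castSeq κ i m n ω)) (rad_pos m n) ih.1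
      exact ⟨j, h1, by rwa [rad_succ]⟩
    have heq : castSeq κ i m (n+1) ω = Nat.find hex := by
      show (if h : ∃ j, dist (QE d j) (QE d (castSeq κ i m n ω)) < rad m n ∧
          0 < κ ω (Metric.ball (QE d j) (rad m (n+1))) then Nat.find h else 0) = Nat.find hex
      rw [dif_pos hex]
    constructor
    · rw [heq]; exact (Nat.find_spec hex).2
    · intro n' hn'
      have : n' = n := by omega
      subst this
      rw [heq]; exact (Nat.find_spec hex).1





lemma rad_eq (m n : ℕ) : rad m n = rad m 0 * (1/2:ℝ)^n := by
  simp [rad, pow_add]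

lemma exists_castaing {Ω : Type*} {mΩ : MeasurableSpace Ω} {d : ℕ}
    (κ : Ω → Measure (Fin d → ℝ))
    (hprob : ∀ ω, IsProbabilityMeasure (κ ω))
    (hmeas : ∀ A : Set (Fin d → ℝ), MeasurableSet A → Measurable fun ω => κ ω A)
    (Y : Ω → Fin d → ℝ) (hYsupp : ∀ ω, Y ω ∈ condSupp κ ω) :
    ∃ ζ : ℕ → Ω → (Fin d → ℝ), (∀ k, Measurable (ζ k)) ∧
      (∀ k ω, ζ k ω ∈ condSupp κ ω) ∧
      (∀ ω, ∀ ε > 0, ∃ k, dist (ζ k ω) (Y ω) < ε) := by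
  have hgood : ∀ ω m, ∃ i', 0 < κ ω (Metric.ball (QE d i') (rad m 0)) := by
    intro ω m
    obtain ⟨j, hj⟩ := exists_QE_close d (Y ω)
      (show (0:ℝ) < rad m 0 / 2 by linarith [rad_pos m 0])
    refine ⟨j, lt_of_lt_of_le
      ((mem_condSupp_iff' κ hprob ω (Y ω)).1 (hYsupp ω) (rad m 0 / 2)
        (by linarith [rad_pos m 0]))
      (measure_mono (Metric.ball_subset_ball' ?_))⟩
    rw [dist_comm]
    linarith [hj]
  have hdist : ∀ i m ω n, dist (QE d (castSeq κ i m n ω)) (QE d (castSeq κ i m (n+1) ω))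
      ≤ rad m 0 * (1/2:ℝ)^n := by
    intro i m ω n
    have h := (castSeq_invariant κ i m ω hprob (hgood ω m) (n+1)).2 n rfl
    rw [dist_comm]
    rw [← rad_eq]
    exact h.le
  have hlim : ∀ i m ω, ∃ z, Tendsto (fun n => QE d (castSeq κ i m n ω)) atTop (𝓝 z) := by
    intro i m ω
    apply cauchySeq_tendsto_of_complete
    exact cauchySeq_of_le_geometric (1/2) (rad m 0) (by norm_num) (hdist i m ω)
  set ζim : ℕ → ℕ → Ω → (Fin d → ℝ) := fun i m ω => Classical.choose (hlim i m ω) with hζ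
  have htend : ∀ i m ω, Tendsto (fun n => QE d (castSeq κ i m n ω)) atTop (𝓝 (ζim i m ω)) :=
    fun i m ω => Classical.choose_spec (hlim i m ω)
  have hb : ∀ i m ω n, dist (QE d (castSeq κ i m n ω)) (ζim i m ω) ≤ 2 * rad m n := by
    intro i m ω n
    have h := dist_le_of_le_geometric_of_tendsto (r := 1/2) (C := rad m 0)
      (by norm_num) (hdist i m ω) (htend i m ω) n
    have h2 : rad m 0 * (1/2:ℝ)^n / (1 - 1/2) = 2 * rad m n := by
      rw [rad_eq m n]; norm_num; ring
    rwa [h2] at h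
  have hmemsupp : ∀ i m ω, ζim i m ω ∈ condSupp κ ω := by
    intro i m ω
    rw [mem_condSupp_iff' κ hprob]
    intro r hr
    obtain ⟨n, hn⟩ := exists_pow_lt_of_lt_one (show (0:ℝ) < r/3 by linarith)
      (show (1/2:ℝ) < 1 by norm_num)
    have hradn : rad m n ≤ (1/2:ℝ)^n := by
      unfold rad
      exact pow_le_pow_of_le_one (by norm_num) (by norm_num) (by omega)
    have hpos := (castSeq_invariant κ i m ω hprob (hgood ω m) n).1
    apply lt_of_lt_of_le hpos
    apply measure_mono
    apply Metric.ball_subset_ball'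
    linarith [rad_pos m n, hradn, hb i m ω n, hn]
  have hdense : ∀ ω, ∀ ε, 0 < ε → ∃ i m, dist (ζim i m ω) (Y ω) < ε := by
    intro ω ε hε
    obtain ⟨m, hm⟩ := exists_pow_lt_of_lt_one (show (0:ℝ) < ε/3 by linarith)
      (show (1/2:ℝ) < 1 by norm_num)
    have hrad0 : rad m 0 = (1/2:ℝ)^m := by simp [rad]
    obtain ⟨i, hi⟩ := exists_QE_close d (Y ω)
      (show (0:ℝ) < rad m 0 / 2 by linarith [rad_pos m 0])
    have hstart_pos : 0 < κ ω (Metric.ball (QE d i) (rad m 0)) := by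
      refine lt_of_lt_of_le
        ((mem_condSupp_iff' κ hprob ω (Y ω)).1 (hYsupp ω) (rad m 0 / 2)
          (by linarith [rad_pos m 0]))
        (measure_mono (Metric.ball_subset_ball' ?_))
      rw [dist_comm]
      linarith [hi]
    have hstart : castSeq κ i m 0 ω = i := by
      show startIdx κ i m ω = i
      unfold startIdx
      rw [if_pos hstart_pos]
    refine ⟨i, m, ?_⟩
    have hd0 := hb i m ω 0
    rw [hstart] at hd0
    have htri := dist_triangle (ζim i m ω) (QE d i) (Y ω)
    rw [dist_comm (ζim i m ω) (QE d i)] at htri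
    have : rad m 0 < ε / 3 := by rw [hrad0]; exact hm
    linarith [hd0, hi, htri, rad_pos m 0]
  refine ⟨fun k => ζim (Nat.unpair k).1 (Nat.unpair k).2, ?_, ?_, ?_⟩
  · intro k
    apply measurable_of_tendsto_metrizable' atTop
      (fun n => measurable_from_top.comp (castSeq_meas κ hmeas _ _ n))
    rw [tendsto_pi_nhds]
    exact fun ω => htend _ _ ω
  · intro k ω
    exact hmemsupp _ _ ω
  · intro ω ε hε
    obtain ⟨i, m, h⟩ := hdense ω ε hε
    exact ⟨Nat.pair i m, by simpa [Nat.unpair_pair] using h⟩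




lemma exists_supergrad {d : ℕ} {φ : (Fin d → ℝ) → ℝ} (hφ : ConcaveOn ℝ Set.univ φ)
    (y0 : Fin d → ℝ) : ∃ s : Fin d → ℝ, ∀ z, φ z ≤ φ y0 + dotp s (fun i => z i - y0 i) := by
  have hcont : Continuous φ := by
    rw [← continuousOn_univ]
    exact hφ.continuousOn isOpen_univ
  set S : Set ((Fin d → ℝ) × ℝ) := {p | p.2 < φ p.1} with hSdef
  have hSopen : IsOpen S := isOpen_lt continuous_snd (hcont.comp continuous_fst)
  have hSconv : Convex ℝ S := by
    intro p hp q hq a b ha hb hab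
    simp only [hSdef, Set.mem_setOf_eq] at hp hq ⊢
    have hcomb := hφ.2 (Set.mem_univ p.1) (Set.mem_univ q.1) ha hb hab
    simp only [smul_eq_mul] at hcomb ⊢
    have h2 : a * p.2 + b * q.2 < a * φ p.1 + b * φ q.1 := by
      rcases lt_or_eq_of_le ha with ha' | ha'
      · have h1 : a * p.2 < a * φ p.1 := (mul_lt_mul_iff_right₀ ha').2 hp
        have h2' : b * q.2 ≤ b * φ q.1 := mul_le_mul_of_nonneg_left hq.le hb
        linarith
      · have hb1 : b = 1 := by linarith
        rw [← ha', hb1]; simpa using hq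
    exact lt_of_lt_of_le h2 hcomb
  have hy0 : ((y0, φ y0) : (Fin d → ℝ) × ℝ) ∉ S := by simp [hSdef]
  obtain ⟨L, hL⟩ := geometric_hahn_banach_open_point hSconv hSopen hy0
  obtain ⟨β, hβdef⟩ : ∃ b : ℝ, b = L (0, 1) := ⟨_, rfl⟩
  obtain ⟨A, hA⟩ : ∃ A : (Fin d → ℝ) → ℝ, ∀ z, A z = L (z, 0) := ⟨_, fun _ => rfl⟩
  have hdec : ∀ (z : Fin d → ℝ) (t : ℝ), L (z, t) = A z + t * β := by
    intro z t
    have h : ((z, t) : (Fin d → ℝ) × ℝ) = (z, 0) + t • (0, 1) := by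
      simp [Prod.ext_iff]
    rw [h, map_add, L.map_smul, smul_eq_mul, hA, hβdef]
  have hβ : 0 < β := by
    have h1 : L (y0, φ y0 - 1) < L (y0, φ y0) := hL _ (by simp [hSdef])
    rw [hdec y0 (φ y0 - 1), hdec y0 (φ y0)] at h1
    linarith
  have key : ∀ z, A z + φ z * β ≤ A y0 + φ y0 * β := by
    intro z
    have h2 : ∀ ε > (0:ℝ), A z + φ z * β - ε * β < A y0 + φ y0 * β := by
      intro ε hε
      have h := hL (z, φ z - ε) (by simp only [hSdef, Set.mem_setOf_eq]; linarith)
      rw [hdec z (φ z - ε), hdec y0 (φ y0)] at h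
      linarith
    by_contra hcon
    push_neg at hcon
    have hδ : 0 < (A z + φ z * β) - (A y0 + φ y0 * β) := by linarith
    have h3 := h2 ((((A z + φ z * β) - (A y0 + φ y0 * β))) / (2 * β))
      (div_pos hδ (by linarith))
    have h4 : ((((A z + φ z * β) - (A y0 + φ y0 * β))) / (2 * β)) * β
        = ((A z + φ z * β) - (A y0 + φ y0 * β)) / 2 := by
      field_simp
    rw [h4] at h3
    linarith
  set M : (Fin d → ℝ) →L[ℝ] ℝ := L.comp (ContinuousLinearMap.inl ℝ (Fin d → ℝ) ℝ) with hMdef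
  have hA' : ∀ z, A z = M z := by
    intro z; rw [hA]; simp [hMdef]
  have husub : ∀ z : Fin d → ℝ, A z - A y0 = A (fun i => z i - y0 i) := by
    intro z
    have h : (fun i => z i - y0 i) = z - y0 := by funext i; simp
    rw [hA', hA', hA', h, map_sub]
  have hulin : ∀ v : Fin d → ℝ, A v = ∑ i, v i * A (fun j => if i = j then 1 else 0) := by
    intro v
    simp only [hA']
    conv_lhs => rw [pi_eq_sum_univ v]
    rw [map_sum]
    exact Finset.sum_congr rfl fun i _ => by rw [M.map_smul, smul_eq_mul]
  refine ⟨fun i => - A (fun j => if i = j then 1 else 0) / β, fun z => ?_⟩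
  have hdot : dotp (fun i => - A (fun j => if i = j then 1 else 0) / β)
      (fun i => z i - y0 i) = (A y0 - A z) / β := by
    have h1 : A y0 - A z = - (A z - A y0) := by ring
    rw [h1, husub z, hulin (fun i => z i - y0 i)]
    unfold dotp
    rw [neg_div, Finset.sum_div, ← Finset.sum_neg_distrib]
    exact Finset.sum_congr rfl fun i _ => by ring
  rw [hdot]
  rw [← sub_le_iff_le_add']
  rw [le_div_iff₀ hβ]
  have hexp : (φ z - φ y0) * β = φ z * β - φ y0 * β := by ring
  rw [hexp]
  linarith [key z]



end AuxAIP

namespace AuxAIP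

/-- A measurable super-hedge for the claim `g (Y ·)` exists. -/
lemma exists_price {Ω : Type*} [mΩ : MeasurableSpace Ω] {d : ℕ}
    (κ : Ω → Measure (Fin d → ℝ))
    (hprob : ∀ ω, IsProbabilityMeasure (κ ω))
    (hmeas : ∀ A : Set (Fin d → ℝ), MeasurableSet A → Measurable fun ω => κ ω A)
    (y Y : Ω → Fin d → ℝ) (hy : Measurable y)
    (hYsupp : ∀ ω, Y ω ∈ condSupp κ ω)
    (g : Ω → (Fin d → ℝ) → ℝ)
    (hgmeas : Measurable[mΩ.prod inferInstance] fun pr : Ω × (Fin d → ℝ) => g pr.1 pr.2)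
    (hglsc : ∀ ω, LowerSemicontinuous (g ω))
    (hgconc : ∀ ω, ∃ φ : (Fin d → ℝ) → ℝ, ConcaveOn ℝ Set.univ φ ∧
      ∀ x ∈ convexHull ℝ (condSupp κ ω), g ω x ≤ φ x) :
    ∃ (c : Ω → ℝ) (θ : Ω → Fin d → ℝ), Measurable c ∧ Measurable θ ∧
      ∀ ω, g ω (Y ω) ≤ c ω + dotp (θ ω) (fun i => Y ω i - y ω i) := by
  obtain ⟨ζ, hζmeas, hζsupp, hζdense⟩ := exists_castaing κ hprob hmeas Y hYsupp
  set A : ℕ → Ω → ℝ := fun k ω => g ω (ζ k ω) with hA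
  set B : ℕ → Ω → Fin d → ℝ := fun k ω => fun i => ζ k ω i - y ω i with hB
  have hAmeas : ∀ k, Measurable (A k) := by
    intro k
    exact hgmeas.comp (Measurable.prodMk measurable_id (hζmeas k))
  have hBmeas : ∀ k, Measurable (B k) := by
    intro k
    apply measurable_pi_lambda
    intro i
    exact ((measurable_pi_apply i).comp (hζmeas k)).sub ((measurable_pi_apply i).comp hy)
  have hprop : ∀ ω, ∃ θ C, ∀ k, A k ω - dotp θ (B k ω) ≤ C := by
    intro ω
    obtain ⟨φ, hφconc, hφle⟩ := hgconc ω
    obtain ⟨s, hs⟩ := exists_supergrad hφconc (y ω)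
    refine ⟨s, φ (y ω), fun k => ?_⟩
    have h1 : g ω (ζ k ω) ≤ φ (ζ k ω) :=
      hφle _ (subset_convexHull ℝ _ (hζsupp k ω))
    have h2 := hs (ζ k ω)
    simp only [hA, hB]
    linarith [h1, h2]
  obtain ⟨θs, c, hθsmeas, hcmeas, hsel⟩ := exists_selection hAmeas hBmeas hprop
  refine ⟨c, θs, hcmeas, hθsmeas, ?_⟩
  intro ω
  by_contra hcon
  push_neg at hcon
  set t : ℝ := c ω + dotp (θs ω) (fun i => Y ω i - y ω i) with ht
  set t' : ℝ := (t + g ω (Y ω))/2 with ht'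
  have htt' : t < t' ∧ t' < g ω (Y ω) := by constructor <;> (simp only [ht']; linarith)
  have hlsc := hglsc ω (Y ω) t' htt'.2
  rw [Metric.eventually_nhds_iff] at hlsc
  obtain ⟨ε, hε, hballg⟩ := hlsc
  set S : ℝ := ∑ i, |θs ω i| with hS
  have hS0 : 0 ≤ S := Finset.sum_nonneg fun i _ => abs_nonneg _
  have htpos : 0 < t' - t := by linarith [htt'.1]
  set δ : ℝ := min ε ((t' - t)/(S+1)) with hδ
  have hδ0 : 0 < δ := lt_min hε (div_pos htpos (by positivity))
  obtain ⟨k, hk⟩ := hζdense ω δ hδ0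
  have hg1 : t' < g ω (ζ k ω) := hballg (lt_of_lt_of_le hk (min_le_left _ _))
  have hg2 : g ω (ζ k ω) ≤ c ω + dotp (θs ω) (fun i => ζ k ω i - y ω i) := by
    have := hsel ω k
    simp only [hA, hB] at this
    linarith
  have hsplit : dotp (θs ω) (fun i => ζ k ω i - y ω i)
      = dotp (θs ω) (fun i => Y ω i - y ω i) + dotp (θs ω) (fun i => ζ k ω i - Y ω i) := by
    rw [dotp_sub_right, dotp_sub_right, dotp_sub_right]
    ring
  have habs : |dotp (θs ω) (fun i => ζ k ω i - Y ω i)| ≤ S * dist (ζ k ω) (Y ω) := by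
    unfold dotp
    refine le_trans (Finset.abs_sum_le_sum_abs _ _) ?_
    rw [hS, Finset.sum_mul]
    apply Finset.sum_le_sum
    intro i _
    rw [abs_mul]
    apply mul_le_mul_of_nonneg_left _ (abs_nonneg _)
    calc |ζ k ω i - Y ω i| = dist (ζ k ω i) (Y ω i) := (Real.dist_eq _ _).symm
    _ ≤ dist (ζ k ω) (Y ω) := dist_le_pi_dist _ _ i
  have hSd : S * dist (ζ k ω) (Y ω) < t' - t := by
    have hd2 : dist (ζ k ω) (Y ω) < (t' - t)/(S+1) := lt_of_lt_of_le hk (min_le_right _ _)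
    have h1 : S * dist (ζ k ω) (Y ω) ≤ S * ((t' - t)/(S+1)) := by
      rcases eq_or_lt_of_le hS0 with h | h
      · rw [← h]; simp
      · exact le_of_lt ((mul_lt_mul_iff_right₀ h).2 hd2)
    have h2 : S * ((t' - t)/(S+1)) < t' - t := by
      rw [← mul_div_assoc]
      rw [div_lt_iff₀ (by positivity : (0:ℝ) < S+1)]
      nlinarith
    linarith
  have habs2 := (abs_le.1 habs).2
  linarith [hg1, hg2, hsplit, habs2, hSd, htt'.1, ht]

end AuxAIP

namespace AuxAIP

lemma measurable_comb_theta {Ω : Type*} [m : MeasurableSpace Ω] {d : ℕ}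
    (θc θf : Ω → Fin d → ℝ) (f : Ω → ℝ) (hθc : Measurable θc) (hθf : Measurable θf)
    (hf : Measurable f) (n : ℝ) :
    Measurable (fun ω => fun i => θc ω i + n * (if f ω < 0 then θf ω i else 0)) := by
  apply measurable_pi_lambda
  intro i
  have hBset : MeasurableSet {ω | f ω < 0} := measurableSet_lt hf measurable_const
  exact ((measurable_pi_apply i).comp hθc).add
    ((Measurable.ite hBset ((measurable_pi_apply i).comp hθf) measurable_const).const_mul _)

lemma measurable_comb_x {Ω : Type*} [m : MeasurableSpace Ω]
    (c f : Ω → ℝ) (hc : Measurable c) (hf : Measurable f) (n : ℝ) :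
    Measurable (fun ω => c ω + n * (if f ω < 0 then f ω else 0)) := by
  have hBset : MeasurableSet {ω | f ω < 0} := measurableSet_lt hf measurable_const
  exact hc.add ((Measurable.ite hBset hf measurable_const).const_mul _)

lemma measurable_const_fun {Ω β : Type*} [m : MeasurableSpace Ω] [MeasurableSpace β]
    (b : β) : Measurable (fun _ : Ω => b) := measurable_const

end AuxAIP


end AuxSection

/-- AIP holds if and only if the infimum super-hedging cost of some
nonnegative `H`-normal integrand `g`, bounded above by a finite concave function on
`conv supp_H Y`, is almost surely nonnegative. -/
theorem aip_iff_nonneg_price_of_some_claim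
    {Ω : Type*} (H : MeasurableSpace Ω) [mΩ : MeasurableSpace Ω] (μ : Measure Ω)
    [IsProbabilityMeasure μ] [μ.IsComplete] (hHF : H ≤ mΩ)
    (hHcomp : ∀ s : Set Ω, μ s = 0 → MeasurableSet[H] s)
    {d : ℕ} (y Y : Ω → Fin d → ℝ)
    (hy : Measurable[H] y) (hY : Measurable[mΩ] Y)
    (hy0 : ∀ ω i, 0 ≤ y ω i) (hY0 : ∀ ω i, 0 ≤ Y ω i)
    (κ : Ω → Measure (Fin d → ℝ)) (hκ : CondLaw H μ Y κ)
    (hYsupp : ∀ ω, Y ω ∈ condSupp κ ω)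
    (p0 : Ω → EReal)
    (hp0 : IsEssInfSet μ (Prices H μ y Y fun _ => (0:ℝ)) p0) :
    (p0 =ᵐ[μ] fun _ => (0:EReal)) ↔
      ∃ g : Ω → (Fin d → ℝ) → ℝ,
        (Measurable[H.prod inferInstance] fun pr : Ω × (Fin d → ℝ) => g pr.1 pr.2) ∧
        (∀ ω, LowerSemicontinuous (g ω)) ∧ (∀ ω z, 0 ≤ g ω z) ∧
        (∀ ω, ∃ φ : (Fin d → ℝ) → ℝ, ConcaveOn ℝ Set.univ φ ∧
          ∀ x ∈ convexHull ℝ (condSupp κ ω), g ω x ≤ φ x) ∧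
        ∃ pg : Ω → EReal, IsEssInfSet μ (Prices H μ y Y fun ω => g ω (Y ω)) pg ∧
          ∀ᵐ ω ∂μ, (0:EReal) ≤ pg ω := by
  constructor
  · -- forward: take `g = 0`
    intro heq
    refine ⟨fun _ _ => 0, measurable_const, fun ω => lowerSemicontinuous_const,
      fun ω z => le_refl 0,
      fun ω => ⟨fun _ => 0, concaveOn_const 0 convex_univ, fun x _ => le_refl 0⟩,
      p0, hp0, ?_⟩
    filter_upwards [heq] with ω h
    rw [h]
  · -- backward
    rintro ⟨g, hgmeas, hglsc, hgnonneg, hgconc, pg, hpg, hpgpos⟩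
    -- a measurable super-hedge of `g (Y ·)`
    obtain ⟨c, θc, hcmeas, hθcmeas, hsel⟩ :=
      @AuxAIP.exists_price Ω H d κ hκ.isProb hκ.meas y Y hy hYsupp g hgmeas hglsc hgconc
    -- every super-hedging price of the zero claim is a.e. nonnegative
    have hallpos : ∀ f ∈ Prices H μ y Y (fun _ => (0:ℝ)), ∀ᵐ ω ∂μ, 0 ≤ f ω := by
      rintro f ⟨hfmeas, θf, hθfmeas, hf⟩
      have hBset : MeasurableSet[H] {ω | f ω < 0} :=
        measurableSet_lt hfmeas measurable_const
      have hprice_n : ∀ n : ℕ,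
          (fun ω => c ω + (n:ℝ) * (if f ω < 0 then f ω else 0))
            ∈ Prices H μ y Y (fun ω => g ω (Y ω)) := by
        intro n
        refine ⟨@AuxAIP.measurable_comb_x Ω H c f hcmeas hfmeas (n:ℝ),
          fun ω i => θc ω i + (n:ℝ) * (if f ω < 0 then θf ω i else 0),
          @AuxAIP.measurable_comb_theta Ω H d θc θf f hθcmeas hθfmeas hfmeas (n:ℝ), ?_⟩
        filter_upwards [hf] with ω hfω
        have hsc := hsel ω
        by_cases hb : f ω < 0
        · simp only [if_pos hb]
          rw [AuxAIP.dotp_add_left, AuxAIP.dotp_smul_left]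
          have h3 : (0:ℝ) ≤ (n:ℝ) * (f ω + dotp (θf ω) fun i => Y ω i - y ω i) :=
            mul_nonneg (by positivity) (by simpa using hfω)
          have h4 : (n:ℝ) * (f ω + dotp (θf ω) fun i => Y ω i - y ω i)
              = (n:ℝ) * f ω + (n:ℝ) * dotp (θf ω) fun i => Y ω i - y ω i := by ring
          linarith [hsc]
        · simp only [if_neg hb, mul_zero, add_zero]
          exact hsc
      have hge : ∀ n : ℕ, ∀ᵐ ω ∂μ, (0:ℝ) ≤ c ω + (n:ℝ) * (if f ω < 0 then f ω else 0) := by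
        intro n
        filter_upwards [hpg.2.1 _ (hprice_n n), hpgpos] with ω h1 h2
        exact_mod_cast le_trans h2 h1
      filter_upwards [ae_all_iff.2 hge] with ω hω
      by_contra hneg
      push_neg at hneg
      obtain ⟨n, hn⟩ := exists_nat_gt (c ω / (-f ω))
      have h2 := hω n
      rw [if_pos hneg] at h2
      have h3 : c ω < (n:ℝ) * (-f ω) := (div_lt_iff₀ (by linarith)).1 hn
      linarith
    -- conclude `p0 = 0` a.e.
    have h0mem : (fun _ => (0:ℝ)) ∈ Prices H μ y Y (fun _ => (0:ℝ)) := by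
      refine ⟨measurable_const, fun _ _ => 0, measurable_const, ?_⟩
      exact Filter.Eventually.of_forall (fun ω => by simp [dotp])
    have hple := hp0.2.1 _ h0mem
    have hpge := hp0.2.2 (fun _ => (0:EReal)) measurable_const ?_
    · filter_upwards [hple, hpge] with ω h1 h2
      exact le_antisymm (by simpa using h1) h2
    · intro f hfmem
      filter_upwards [hallpos f hfmem] with ω h
      exact_mod_cast h
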